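/- Let K be a field, n, m coprime positive integers, and f(x,y) ∈ K[x,y] a quasihomogeneous polynomial for the weight ω(i,j) = n·i + m·j, of ω-degree w. Then f can be written uniquely as f(x,y) = x^u · y^v · q(x^m, y^n), where q(s1,s2) ∈ K[s1,s2] is homogeneous of degree d, q is coprime with s1·s2, and w = n·u + m·v + n·m·d. -/

import Mathlib

open MvPolynomial

namespace Stmt5Aux

variable {K : Type*} [Field K]

lemma fin2_eq (e : Fin 2 →₀ ℕ) : e = Finsupp.single 0 (e 0) + Finsupp.single 1 (e 1) := by
  ext i
  fin_cases i <;> simp [Finsupp.single_apply]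

lemma pair_apply0 (a b : ℕ) :
    (Finsupp.single (0 : Fin 2) a + Finsupp.single (1 : Fin 2) b : Fin 2 →₀ ℕ) 0 = a := by
  simp [Finsupp.single_apply]

lemma pair_apply1 (a b : ℕ) :
    (Finsupp.single (0 : Fin 2) a + Finsupp.single (1 : Fin 2) b : Fin 2 →₀ ℕ) 1 = b := by
  simp [Finsupp.single_apply]

lemma weight_fin2 (w : Fin 2 → ℕ) (e : Fin 2 →₀ ℕ) :
    Finsupp.weight w e = e 0 * w 0 + e 1 * w 1 := by
  rw [Finsupp.weight_apply, Finsupp.sum_fintype]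
  · simp [Fin.sum_univ_two, smul_eq_mul]
  · intro i; simp

noncomputable def mk (σf : (Fin 2 →₀ ℕ) → (Fin 2 →₀ ℕ)) (p : MvPolynomial (Fin 2) K) :
    MvPolynomial (Fin 2) K :=
  ∑ e ∈ p.support, monomial (σf e) (coeff e p)

lemma coeff_mk {σf : (Fin 2 →₀ ℕ) → (Fin 2 →₀ ℕ)} {p : MvPolynomial (Fin 2) K}
    (hinj : Set.InjOn σf p.support) {e : Fin 2 →₀ ℕ} (he : e ∈ p.support) :
    coeff (σf e) (mk σf p) = coeff e p := by
  unfold mk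
  rw [coeff_sum]
  rw [Finset.sum_eq_single_of_mem e he]
  · simp [coeff_monomial]
  · intro b hb hbe
    rw [coeff_monomial, if_neg (fun h => hbe (hinj hb he h))]

lemma coeff_mk_eq_zero {σf : (Fin 2 →₀ ℕ) → (Fin 2 →₀ ℕ)} {p : MvPolynomial (Fin 2) K}
    {k : Fin 2 →₀ ℕ} (h : ∀ e ∈ p.support, σf e ≠ k) :
    coeff k (mk σf p) = 0 := by
  unfold mk
  rw [coeff_sum]
  exact Finset.sum_eq_zero fun e he => by rw [coeff_monomial, if_neg (h e he)]

lemma coeff_mk' {σf : (Fin 2 →₀ ℕ) → (Fin 2 →₀ ℕ)} (hinj : Function.Injective σf)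
    (p : MvPolynomial (Fin 2) K) (k : Fin 2 →₀ ℕ) :
    coeff (σf k) (mk σf p) = coeff k p := by
  by_cases hk : k ∈ p.support
  · exact coeff_mk hinj.injOn hk
  · rw [coeff_mk_eq_zero fun e he h => hk (by rw [← hinj h]; exact he),
      MvPolynomial.notMem_support_iff.mp hk]

lemma support_mk_subset {σf : (Fin 2 →₀ ℕ) → (Fin 2 →₀ ℕ)} {p : MvPolynomial (Fin 2) K}
    {k : Fin 2 →₀ ℕ} (hk : k ∈ (mk σf p).support) : ∃ e ∈ p.support, σf e = k := by
  by_contra h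
  push_neg at h
  exact (MvPolynomial.mem_support_iff.mp hk) (coeff_mk_eq_zero h)

noncomputable def T (n m u v : ℕ) : (Fin 2 →₀ ℕ) → (Fin 2 →₀ ℕ) :=
  fun e => Finsupp.single 0 (u + m * e 0) + Finsupp.single 1 (v + n * e 1)

lemma T_inj {n m : ℕ} (hn : 0 < n) (hm : 0 < m) (u v : ℕ) :
    Function.Injective (T n m u v) := by
  intro e e' h
  have h0 : u + m * e 0 = u + m * e' 0 := by
    have := congrArg (fun g => g 0) h
    simpa [T, pair_apply0] using this
  have h1 : v + n * e 1 = v + n * e' 1 := by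
    have := congrArg (fun g => g 1) h
    simpa [T, pair_apply1] using this
  have h0' : e 0 = e' 0 := by
    exact Nat.eq_of_mul_eq_mul_left hm (by omega)
  have h1' : e 1 = e' 1 := by
    exact Nat.eq_of_mul_eq_mul_left hn (by omega)
  rw [fin2_eq e, fin2_eq e', h0', h1']

lemma mono_eq (n m u v : ℕ) (e : Fin 2 →₀ ℕ) (c : K) :
    X 0 ^ u * X 1 ^ v * ((C c : MvPolynomial (Fin 2) K) * (X 0 ^ (m * e 0) * X 1 ^ (n * e 1)))
    = monomial (T n m u v e) c := by
  rw [T, X_pow_eq_monomial, X_pow_eq_monomial, X_pow_eq_monomial, X_pow_eq_monomial, C_apply,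
    monomial_mul, monomial_mul, monomial_mul, monomial_mul]
  rw [monomial_eq_monomial_iff]
  left
  constructor
  · ext i
    fin_cases i <;> simp [Finsupp.single_apply]
  · ring

lemma expandT (n m u v : ℕ) (q : MvPolynomial (Fin 2) K) :
    X 0 ^ u * X 1 ^ v * aeval ![X 0 ^ m, X 1 ^ n] q = mk (T n m u v) q := by
  conv_lhs => rw [q.as_sum]
  rw [map_sum, Finset.mul_sum]
  unfold mk
  apply Finset.sum_congr rfl
  intro e _
  rw [aeval_monomial, Finsupp.prod_fintype _ _ (fun i => pow_zero _)]
  simp only [Fin.prod_univ_two, Matrix.cons_val_zero, Matrix.cons_val_one, Matrix.head_cons,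
    ← pow_mul, algebraMap_eq]
  exact mono_eq n m u v e _

lemma X_dvd_iff_support {i : Fin 2} {q : MvPolynomial (Fin 2) K} :
    X i ∣ q ↔ ∀ e ∈ q.support, e i ≠ 0 := by
  rw [MvPolynomial.X_dvd_iff_modMonomial_eq_zero]
  constructor
  · intro h e he hei
    have h2 := congrArg (coeff e) h
    rw [coeff_modMonomial_of_not_le _ (by rw [Finsupp.single_le_iff]; omega),
      coeff_zero] at h2
    exact MvPolynomial.mem_support_iff.mp he h2
  · intro h
    ext e
    by_cases hle : Finsupp.single i 1 ≤ e
    · rw [coeff_modMonomial_of_le _ hle, coeff_zero]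
    · rw [coeff_modMonomial_of_not_le _ hle, coeff_zero]
      by_contra hne
      exact hle (Finsupp.single_le_iff.mpr (Nat.one_le_iff_ne_zero.mpr
        (h e (MvPolynomial.mem_support_iff.mpr hne))))

end Stmt5Aux



open MvPolynomial Stmt5Aux in
/-- A nonzero ω-quasihomogeneous polynomial `f` of ω-degree `w` (for the weight
`ω(i,j) = n·i + m·j`, `n, m` coprime) can be written uniquely as
`f = x^u · y^v · q(x^m, y^n)` with `q` homogeneous of degree `d` coprime with
`s1·s2`, and `w = n·u + m·v + n·m·d`. -/
theorem stmt_5 (K : Type*) [Field K] (n m w : ℕ) (hn : 0 < n) (hm : 0 < m)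
    (hcop : Nat.Coprime n m)
    (f : MvPolynomial (Fin 2) K) (hf : f ≠ 0)
    (hqh : MvPolynomial.IsWeightedHomogeneous ![n, m] f w) :
    ∃ (u v d : ℕ) (q : MvPolynomial (Fin 2) K),
      (q.IsHomogeneous d ∧ ¬ (MvPolynomial.X 0 ∣ q) ∧ ¬ (MvPolynomial.X 1 ∣ q) ∧
        w = n * u + m * v + n * m * d ∧
        f = MvPolynomial.X 0 ^ u * MvPolynomial.X 1 ^ v *
          MvPolynomial.aeval ![MvPolynomial.X 0 ^ m, MvPolynomial.X 1 ^ n] q) ∧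
      (∀ (u' v' d' : ℕ) (q' : MvPolynomial (Fin 2) K),
        (q'.IsHomogeneous d' ∧ ¬ (MvPolynomial.X 0 ∣ q') ∧ ¬ (MvPolynomial.X 1 ∣ q') ∧
          w = n * u' + m * v' + n * m * d' ∧
          f = MvPolynomial.X 0 ^ u' * MvPolynomial.X 1 ^ v' *
            MvPolynomial.aeval ![MvPolynomial.X 0 ^ m, MvPolynomial.X 1 ^ n] q') →
        u = u' ∧ v = v' ∧ d = d' ∧ q = q') := by
  classical
  have hw : ∀ e ∈ f.support, e 0 * n + e 1 * m = w := by
    intro e he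
    have h := hqh (MvPolynomial.mem_support_iff.mp he)
    rw [weight_fin2] at h
    simpa using h
  have hS : f.support.Nonempty := MvPolynomial.support_nonempty.mpr hf
  set u := (f.support.image fun e => e 0).min' (hS.image _) with hu
  set v := (f.support.image fun e => e 1).min' (hS.image _) with hv
  have hule : ∀ e ∈ f.support, u ≤ e 0 := fun e he =>
    Finset.min'_le _ _ (Finset.mem_image_of_mem _ he)
  have hvle : ∀ e ∈ f.support, v ≤ e 1 := fun e he =>
    Finset.min'_le _ _ (Finset.mem_image_of_mem _ he)
  obtain ⟨e_u, he_u, he_u0⟩ : ∃ e ∈ f.support, e 0 = u := by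
    have h := (f.support.image fun e => e 0).min'_mem (hS.image _)
    rw [← hu] at h
    simpa [Finset.mem_image] using h
  obtain ⟨e_v, he_v, he_v1⟩ : ∃ e ∈ f.support, e 1 = v := by
    have h := (f.support.image fun e => e 1).min'_mem (hS.image _)
    rw [← hv] at h
    simpa [Finset.mem_image] using h
  -- key decomposition of exponents
  have key : ∀ e ∈ f.support, e 0 = u + m * ((e 0 - u) / m) ∧ e 1 = v + n * ((e 1 - v) / n) := by
    intro e he
    have h1 := hw e he
    constructor
    · have hle := hule e he
      have h2 := hw e_u he_u
      rw [he_u0] at h2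
      have hz : (n : ℤ) * ((e 0 : ℤ) - u) = (m : ℤ) * ((e_u 1 : ℤ) - e 1) := by
        have h1' : ((e 0 : ℤ)) * n + (e 1 : ℤ) * m = w := by exact_mod_cast h1
        have h2' : ((u : ℤ)) * n + (e_u 1 : ℤ) * m = w := by exact_mod_cast h2
        linarith
      have hdvd2 : m ∣ n * (e 0 - u) := by
        have hc : ((m : ℤ)) ∣ ((n * (e 0 - u) : ℕ) : ℤ) := by
          push_cast [Nat.cast_sub hle]
          exact ⟨_, hz⟩
        exact_mod_cast hc
      have hdvd3 : m ∣ e 0 - u := hcop.symm.dvd_of_dvd_mul_left hdvd2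
      rw [Nat.mul_div_cancel' hdvd3]
      omega
    · have hle := hvle e he
      have h2 := hw e_v he_v
      rw [he_v1] at h2
      have hz : (m : ℤ) * ((e 1 : ℤ) - v) = (n : ℤ) * ((e_v 0 : ℤ) - e 0) := by
        have h1' : ((e 0 : ℤ)) * n + (e 1 : ℤ) * m = w := by exact_mod_cast h1
        have h2' : ((e_v 0 : ℤ)) * n + (v : ℤ) * m = w := by exact_mod_cast h2
        linarith
      have hdvd2 : n ∣ m * (e 1 - v) := by
        have hc : ((n : ℤ)) ∣ ((m * (e 1 - v) : ℕ) : ℤ) := by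
          push_cast [Nat.cast_sub hle]
          exact ⟨_, hz⟩
        exact_mod_cast hc
      have hdvd3 : n ∣ e 1 - v := hcop.dvd_of_dvd_mul_left hdvd2
      rw [Nat.mul_div_cancel' hdvd3]
      omega
  set A : (Fin 2 →₀ ℕ) → (Fin 2 →₀ ℕ) :=
    fun e => Finsupp.single 0 ((e 0 - u) / m) + Finsupp.single 1 ((e 1 - v) / n) with hA
  have hA0 : ∀ e, (A e) 0 = (e 0 - u) / m := fun e => pair_apply0 _ _
  have hA1 : ∀ e, (A e) 1 = (e 1 - v) / n := fun e => pair_apply1 _ _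
  have hAinj : Set.InjOn A f.support := by
    intro e he e' he' hee
    have h0 : (e 0 - u) / m = (e' 0 - u) / m := by
      rw [← hA0 e, ← hA0 e', hee]
    have h1 : (e 1 - v) / n = (e' 1 - v) / n := by
      rw [← hA1 e, ← hA1 e', hee]
    have h0' : e 0 = e' 0 := by rw [(key e he).1, (key e' he').1, h0]
    have h1' : e 1 = e' 1 := by rw [(key e he).2, (key e' he').2, h1]
    rw [fin2_eq e, fin2_eq e', h0', h1']
  set q := mk A f with hq
  have hTA : ∀ e ∈ f.support, T n m u v (A e) = e := by
    intro e he
    rw [T]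
    rw [hA0, hA1, ← (key e he).1, ← (key e he).2]
    exact (fin2_eq e).symm
  have hTinj := T_inj (n := n) (m := m) hn hm u v
  have hfmk : f = mk (T n m u v) q := by
    ext k
    by_cases hk : k ∈ f.support
    · calc coeff k f = coeff (A k) q := (coeff_mk hAinj hk).symm
        _ = coeff (T n m u v (A k)) (mk (T n m u v) q) := (coeff_mk' hTinj q (A k)).symm
        _ = coeff k (mk (T n m u v) q) := by rw [hTA k hk]
    · rw [MvPolynomial.notMem_support_iff.mp hk]
      symm
      apply coeff_mk_eq_zero
      intro e' he' hTe'
      obtain ⟨e, heS, hAe⟩ := support_mk_subset he'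
      rw [← hAe, hTA e heS] at hTe'
      exact hk (hTe' ▸ heS)
  -- membership/coefficients of q
  have hAmem : ∀ e ∈ f.support, A e ∈ q.support := by
    intro e he
    rw [MvPolynomial.mem_support_iff, coeff_mk hAinj he]
    exact MvPolynomial.mem_support_iff.mp he
  set d := (e_u 1 - v) / n with hd
  have hAu0 : (A e_u) 0 = 0 := by rw [hA0, he_u0]; simp
  have hAv1 : (A e_v) 1 = 0 := by rw [hA1, he_v1]; simp
  have hwd : w = n * u + m * v + n * m * d := by
    have h2 := hw e_u he_u
    rw [he_u0, (key e_u he_u).2] at h2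
    rw [← hd] at h2
    rw [← h2]
    ring
  -- homogeneity of q
  have hhom : q.IsHomogeneous d := by
    intro k hk
    obtain ⟨e, heS, hAe⟩ := support_mk_subset (MvPolynomial.mem_support_iff.mpr hk)
    rw [weight_fin2]
    subst hAe
    rw [hA0, hA1]
    set a := (e 0 - u) / m
    set b := (e 1 - v) / n
    have hE := hw e heS
    rw [(key e heS).1, (key e heS).2, hwd] at hE
    have hzz : (n : ℤ) * m * (a + b) = (n : ℤ) * m * d := by
      have hE' : ((u : ℤ) + m * a) * n + ((v : ℤ) + n * b) * m
          = n * u + m * v + n * m * d := by exact_mod_cast hE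
      linarith
    have hab : (a : ℤ) + b = d :=
      mul_left_cancel₀ (by positivity) hzz
    have : a + b = d := by exact_mod_cast hab
    simpa using this
  refine ⟨u, v, d, q, ⟨hhom, ?_, ?_, hwd, by rw [expandT]; exact hfmk⟩, ?_⟩
  · rw [X_dvd_iff_support]
    push_neg
    exact ⟨A e_u, hAmem e_u he_u, hAu0⟩
  · rw [X_dvd_iff_support]
    push_neg
    exact ⟨A e_v, hAmem e_v he_v, hAv1⟩
  -- uniqueness
  rintro u' v' d' q' ⟨hhom', hX0', hX1', hwd', hfeq'⟩
  have hT'inj := T_inj (n := n) (m := m) hn hm u' v'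
  have hf' : f = mk (T n m u' v') q' := by rw [hfeq', expandT]
  have hT'0 : ∀ k, (T n m u' v' k) 0 = u' + m * k 0 := fun k => pair_apply0 _ _
  have hT'1 : ∀ k, (T n m u' v' k) 1 = v' + n * k 1 := fun k => pair_apply1 _ _
  have hsupp' : ∀ e ∈ f.support, ∃ k ∈ q'.support, T n m u' v' k = e := by
    intro e he
    exact support_mk_subset (by rw [← hf']; exact he)
  have hmem' : ∀ k ∈ q'.support, T n m u' v' k ∈ f.support := by
    intro k hk
    rw [MvPolynomial.mem_support_iff, hf', coeff_mk' hT'inj]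
    exact MvPolynomial.mem_support_iff.mp hk
  have huu' : u = u' := by
    have h1 : u' ≤ u := by
      obtain ⟨k, hk, hTk⟩ := hsupp' e_u he_u
      have h := congrArg (fun g => g 0) hTk
      rw [hT'0] at h
      rw [he_u0] at h
      omega
    have h2 : u ≤ u' := by
      rw [X_dvd_iff_support] at hX0'
      push_neg at hX0'
      obtain ⟨k, hk, hk0⟩ := hX0'
      have hmem := hmem' k hk
      have h := hule _ hmem
      rw [hT'0, hk0] at h
      omega
    omega
  have hvv' : v = v' := by
    have h1 : v' ≤ v := by
      obtain ⟨k, hk, hTk⟩ := hsupp' e_v he_v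
      have h := congrArg (fun g => g 1) hTk
      rw [hT'1] at h
      rw [he_v1] at h
      omega
    have h2 : v ≤ v' := by
      rw [X_dvd_iff_support] at hX1'
      push_neg at hX1'
      obtain ⟨k, hk, hk1⟩ := hX1'
      have hmem := hmem' k hk
      have h := hvle _ hmem
      rw [hT'1, hk1] at h
      omega
    omega
  have hdd' : d = d' := by
    have h := hwd.symm.trans hwd'
    rw [← huu', ← hvv'] at h
    have h2 := Nat.add_left_cancel h
    exact Nat.eq_of_mul_eq_mul_left (Nat.mul_pos hn hm) h2
  refine ⟨huu', hvv', hdd', ?_⟩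
  ext k
  have h1 : coeff k q = coeff (T n m u v k) f := by
    rw [hfmk, coeff_mk' hTinj]
  have h2 : coeff k q' = coeff (T n m u' v' k) f := by
    rw [hf', coeff_mk' hT'inj]
  rw [h1, h2, huu', hvv']
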